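/- A polynomial with only real roots of degree n ≥ 2 is trivial (of the form a(x−b)^n) if and only if its (n−2)-th derivative has a double root. -/

import Mathlib

open Polynomial

lemma esymm_one_eq (s : Multiset ℝ) : s.esymm 1 = s.sum := by
  simp [Multiset.esymm, Multiset.powersetCard_one, Multiset.map_map, Function.comp]

lemma sum_sq_esymm (s : Multiset ℝ) :
    s.sum ^ 2 = (s.map (fun r => r ^ 2)).sum + 2 * s.esymm 2 := by
  induction s using Multiset.induction with
  | empty => simp [Multiset.esymm, Multiset.powersetCard_eq_empty 2 (s := (0 : Multiset ℝ)) (by simp)]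
  | cons a t ih =>
    have h2 : (a ::ₘ t).esymm 2 = t.esymm 2 + a * t.sum := by
      rw [show (2:ℕ) = 1 + 1 from rfl, Multiset.esymm, Multiset.powersetCard_cons,
        Multiset.powersetCard_one]
      simp [Multiset.map_map, Function.comp, Multiset.sum_map_mul_left, esymm_one_eq]
      rw [Multiset.sum_map_mul_left, Multiset.map_id', Multiset.esymm]
    simp only [Multiset.sum_cons, Multiset.map_cons, h2]
    nlinarith [ih]

lemma quad_sum (s : Multiset ℝ) (c d : ℝ) :
    (s.map (fun r => (c * r - d) ^ 2)).sum =
      c ^ 2 * (s.map (fun r => r ^ 2)).sum - 2 * c * d * s.sum + s.card * d ^ 2 := by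
  induction s using Multiset.induction with
  | empty => simp
  | cons a t ih =>
    simp only [Multiset.map_cons, Multiset.sum_cons, Multiset.card_cons, ih]
    push_cast
    ring

set_option maxHeartbeats 1000000 in
theorem stmt_4 (n : ℕ) (hn : 2 ≤ n) (f : ℝ[X]) (hdeg : f.natDegree = n)
    (hreal : f.roots.card = n) :
    (∃ a b : ℝ, a ≠ 0 ∧ f = C a * (X - C b) ^ n) ↔
      (∃ x : ℝ, (derivative^[n - 2] f).eval x = 0 ∧ (derivative^[n - 1] f).eval x = 0) := by
  obtain ⟨m, rfl⟩ : ∃ m, n = m + 2 := ⟨n - 2, by omega⟩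
  simp only [show m + 2 - 2 = m from rfl, show m + 2 - 1 = m + 1 from rfl]
  constructor
  · rintro ⟨a, b, ha, rfl⟩
    refine ⟨b, ?_, ?_⟩ <;>
      rw [Polynomial.iterate_derivative_C_mul, Polynomial.iterate_derivative_X_sub_pow] <;>
      simp [show m + 2 - m = 2 from by omega, show m + 2 - (m + 1) = 1 from by omega]
  · rintro ⟨x, h1, h2⟩
    have hf0 : f ≠ 0 := fun h => by rw [h] at hdeg; simp at hdeg
    have ha : f.leadingCoeff ≠ 0 := leadingCoeff_ne_zero.mpr hf0
    set a := f.leadingCoeff with ha_def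
    set s := f.roots with hs_def
    have hcard : Multiset.card s = m + 2 := hreal
    have hsplit : C a * (s.map fun r => X - C r).prod = f :=
      C_leadingCoeff_mul_prod_multiset_X_sub_C (by rw [hreal, hdeg])
    set e1 := s.sum with he1
    set e2 := s.esymm 2 with he2
    set p2 := (s.map fun r => r ^ 2).sum with hp2
    have hc2 : f.coeff (m + 2) = a := by rw [← hdeg]; exact f.coeff_natDegree
    have hc1 : f.coeff (m + 1) = -(a * e1) := by
      rw [← hsplit, coeff_C_mul,
        Multiset.prod_X_sub_C_coeff s (by rw [hcard]; omega), hcard,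
        show m + 2 - (m + 1) = 1 from by omega, esymm_one_eq]
      ring
    have hc0 : f.coeff m = a * e2 := by
      rw [← hsplit, coeff_C_mul,
        Multiset.prod_X_sub_C_coeff s (by rw [hcard]; omega), hcard,
        show m + 2 - m = 2 from by omega]
      ring_nf
      rfl
    have hd1 : (derivative^[m] f).natDegree < 3 := by
      have := Polynomial.natDegree_iterate_derivative f m
      omega
    have hd2 : (derivative^[m + 1] f).natDegree < 2 := by
      have := Polynomial.natDegree_iterate_derivative f (m + 1)
      omega
    rw [Polynomial.eval_eq_sum_range' hd1 x] at h1
    rw [Polynomial.eval_eq_sum_range' hd2 x] at h2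
    -- descFactorial facts
    have hD1 : (m + 1).descFactorial m = (m + 1).factorial := by
      have h := Nat.descFactorial_succ (m + 1) m
      rw [show m + 1 - m = 1 from by omega, one_mul] at h
      rw [← h, Nat.descFactorial_self]
    have hE : (m + 2).descFactorial (m + 1) = 2 * (m + 2).descFactorial m := by
      rw [Nat.descFactorial_succ, show m + 2 - m = 2 from by omega]
    have hD2 : 2 * (m + 2).descFactorial m = (m + 2).factorial := by
      have h := Nat.descFactorial_succ (m + 2) (m + 1)
      rw [show m + 2 - (m + 1) = 1 from by omega, one_mul] at h
      rw [← hE, ← h, Nat.descFactorial_self]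
    simp only [Finset.sum_range_succ, Finset.sum_range_zero, zero_add,
      Polynomial.coeff_iterate_derivative, show 1 + m = m + 1 from by omega,
      show 2 + m = m + 2 from by omega, show 1 + (m + 1) = m + 2 from by omega,
      hc0, hc1, hc2, hD1, hE, Nat.descFactorial_self, nsmul_eq_mul, pow_zero, pow_one,
      mul_one] at h1 h2
    set U : ℝ := (m.factorial : ℝ) with hU_def
    have hU : (0:ℝ) < U := by rw [hU_def]; exact_mod_cast Nat.factorial_pos m
    have hGU : ((m + 1).factorial : ℝ) = ((m:ℝ) + 1) * U := by
      rw [hU_def, Nat.factorial_succ]; push_cast; ring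
    have hF : (((m + 2).descFactorial m : ℕ) : ℝ) = ((m:ℝ) + 2) * (((m:ℝ) + 1) * U) / 2 := by
      have h : ((2 * (m + 2).descFactorial m : ℕ) : ℝ)
          = (((m + 2) * (m + 1).factorial : ℕ) : ℝ) := by
        rw [hD2, Nat.factorial_succ]
      push_cast at h
      rw [hGU] at h
      linarith
    rw [hGU] at h1 h2
    push_cast at h1 h2
    rw [hF] at h1 h2
    -- h1 : U * (a * e2) + (m+1)*U * (-(a*e1)) * x + F * a * x^2 = 0 (some form)
    -- h2 : (m+1)*U * (-(a*e1)) + 2*F*a*x = 0 (some form)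
    have key : ((m:ℝ) + 1) * e1 ^ 2 = 2 * ((m:ℝ) + 2) * e2 := by
      have ha2 : (a:ℝ) ^ 2 ≠ 0 := pow_ne_zero 2 ha
      have hc : ((m:ℝ) + 1) * U ^ 2 ≠ 0 := by positivity
      have key1 : a ^ 2 * (((m:ℝ)+1) * U^2 * (((m:ℝ) + 1) * e1 ^ 2 - 2 * ((m:ℝ) + 2) * e2)) = 0 := by
        linear_combination (-2 * (((m:ℝ)+2) * (((m:ℝ)+1) * U)) * a) * h1 +
          ((((m:ℝ)+2) * (((m:ℝ)+1) * U) * a * x - ((m:ℝ)+1) * U * a * e1)) * h2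
      have := mul_eq_zero.mp key1
      rcases this with h | h
      · exact absurd h ha2
      · rcases mul_eq_zero.mp h with h' | h'
        · exact absurd h' hc
        · linarith
    have hnewton := sum_sq_esymm s
    rw [← he1, ← he2, ← hp2] at hnewton
    have hkey2 : e1 ^ 2 = ((m:ℝ) + 2) * p2 := by linear_combination ((m:ℝ)+2) * hnewton - key
    -- all roots equal
    have hsum0 : (s.map (fun r => (((m:ℝ) + 2) * r - e1) ^ 2)).sum = 0 := by
      rw [quad_sum, hcard, ← he1, ← hp2]
      push_cast
      linear_combination (-((m:ℝ)+2)) * hkey2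
    set b : ℝ := e1 / ((m:ℝ) + 2) with hb
    have hall : ∀ r ∈ s, r = b := by
      intro r hr
      have hmem : (((m:ℝ) + 2) * r - e1) ^ 2 ∈ s.map (fun r => (((m:ℝ) + 2) * r - e1) ^ 2) :=
        Multiset.mem_map_of_mem _ hr
      have hle : (((m:ℝ) + 2) * r - e1) ^ 2 ≤ 0 := by
        rw [← hsum0]
        exact Multiset.single_le_sum (fun y hy => by
          obtain ⟨z, _, rfl⟩ := Multiset.mem_map.mp hy; positivity) _ hmem
      have h0 : (((m:ℝ) + 2) * r - e1) = 0 := by nlinarith [sq_nonneg (((m:ℝ) + 2) * r - e1)]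
      rw [hb]
      field_simp
      linarith
    have hrep : s = Multiset.replicate (m + 2) b := by
      rw [← hcard]
      exact Multiset.eq_replicate_card.mpr hall
    refine ⟨a, b, ha, ?_⟩
    rw [← hsplit, hrep, Multiset.map_replicate, Multiset.prod_replicate]
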